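/- Let A be the polynomial ring over Q in variables x_{i,j} (for integers i ≤ j+2 with i+j even, with conventions x_{0,0} = g and x_{i,j} = 0 if i < 0 or j < 0 or j > 2g-2) and y, bigraded so that x_{i,j} has bidegree (i,j) and y has bidegree (0,2). Define E(α) = x_{2,0}·α, H(α) = (i-g)·α for α of bidegree (i,j), and F = (1/2)Σ_{i,j,k,l} (y·x_{i-1,j-1}·x_{k-1,l-1} - C(i+k-2, i-1)·x_{i+k-2,j+l}) ∂x_{i,j} ∂x_{k,l} + Σ_{i,j} x_{i-2,j} ∂x_{i,j}. Then [E,F] = H, [H,E] = 2E, and [H,F] = -2F, so E, F, H define an sl2-representation on A. -/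

import Mathlib

open MvPolynomial Finset
open MvPolynomial Finset

/-- The index set of the tautological variables `x_{i,j}`: pairs `(i,j)` with
`0 ≤ i ≤ j + 2`, `0 ≤ j ≤ 2g-2`, `i + j` even, and `(i,j) ≠ (0,0)`. -/
abbrev Vars (g : ℕ) :=
  {p : Fin (2 * g + 1) × Fin (2 * g + 1) //
    (p.1 : ℕ) ≤ (p.2 : ℕ) + 2 ∧ (p.2 : ℕ) ≤ 2 * g - 2 ∧
      ((p.1 : ℕ) + (p.2 : ℕ)) % 2 = 0 ∧ ¬((p.1 : ℕ) = 0 ∧ (p.2 : ℕ) = 0)}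

/-- Variables of the ring `A`: the `x_{i,j}` together with `y`. -/
abbrev Idx (g : ℕ) := Vars g ⊕ Unit

/-- The bigraded polynomial ring `A = ℚ[{x_{i,j}}, y]` (with `x_{0,0} = g` and `x_{i,j} = 0`
for out-of-range indices, implemented via the total function `xv`). -/
abbrev A (g : ℕ) := MvPolynomial (Idx g) ℚ

/-- The class `y` (i.e. `ψ`), of bidegree `(0,2)`. -/
noncomputable def Y (g : ℕ) : A g := X (Sum.inr ())

/-- The element `x_{i,j}` of `A`, for arbitrary integers `i, j`: the corresponding variable
when the indices are in range, `g` when `(i,j) = (0,0)`, and `0` otherwise. -/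
noncomputable def xv (g : ℕ) (i j : ℤ) : A g :=
  if h : 0 ≤ i ∧ 0 ≤ j ∧ i ≤ j + 2 ∧ j ≤ 2 * (g : ℤ) - 2 ∧ (i + j) % 2 = 0 ∧
      ¬(i = 0 ∧ j = 0) then
    X (Sum.inl ⟨(⟨i.toNat, by omega⟩, ⟨j.toNat, by omega⟩),
      show i.toNat ≤ j.toNat + 2 by omega,
      show j.toNat ≤ 2 * g - 2 by omega,
      show (i.toNat + j.toNat) % 2 = 0 by omega,
      show ¬(i.toNat = 0 ∧ j.toNat = 0) by omega⟩)
  else if i = 0 ∧ j = 0 then (g : A g) else 0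

/-- First index of a variable. -/
def vi {g : ℕ} (v : Vars g) : ℤ := (v.1.1 : ℕ)

/-- Second index of a variable. -/
def vj {g : ℕ} (v : Vars g) : ℤ := (v.1.2 : ℕ)

/-- Binomial coefficient `C(n, k)` for integers, zero when `k < 0`. -/
noncomputable def binom (n k : ℤ) : ℚ :=
  if 0 ≤ k then (∏ s ∈ Finset.range k.toNat, ((n : ℚ) - s)) / k.toNat.factorial else 0

/-- The operator `E`: multiplication by `x_{2,0}`. -/
noncomputable def Eop (g : ℕ) : Module.End ℚ (A g) := LinearMap.mulLeft ℚ (xv g 2 0)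

/-- The differential operator
`F = (1/2) Σ (y x_{i-1,j-1} x_{k-1,l-1} - C(i+k-2, i-1) x_{i+k-2,j+l}) ∂x_{i,j} ∂x_{k,l}
      + Σ x_{i-2,j} ∂x_{i,j}`. -/
noncomputable def Fop (g : ℕ) : Module.End ℚ (A g) :=
  (1 / 2 : ℚ) • (∑ v : Vars g, ∑ w : Vars g,
      LinearMap.mulLeft ℚ
          (Y g * xv g (vi v - 1) (vj v - 1) * xv g (vi w - 1) (vj w - 1) -
            C (binom (vi v + vi w - 2) (vi v - 1)) * xv g (vi v + vi w - 2) (vj v + vj w)) ∘ₗ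
        (pderiv (Sum.inl v)).toLinearMap ∘ₗ (pderiv (Sum.inl w)).toLinearMap) +
    ∑ v : Vars g,
      LinearMap.mulLeft ℚ (xv g (vi v - 2) (vj v)) ∘ₗ (pderiv (Sum.inl v)).toLinearMap

/-- The bigrading: `x_{i,j}` has weight `(i,j)` and `y` has weight `(0,2)`. -/
def wt (g : ℕ) : Idx g → ℤ × ℤ := Sum.elim (fun v => (vi v, vj v)) (fun _ => (0, 2))


namespace Sl2Aux

lemma finsupp_sub_add {σ : Type*} [DecidableEq σ] (d : σ →₀ ℕ) (n : σ) (h : d n ≠ 0) :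
    (d - Finsupp.single n 1) + Finsupp.single n 1 = d := by
  ext s
  by_cases hs : s = n
  · subst hs
    simp only [Finsupp.add_apply, Finsupp.tsub_apply, Finsupp.single_eq_same]
    omega
  · simp [Finsupp.single_eq_of_ne' (Ne.symm hs)]

lemma weight_single_one {σ M : Type*} [AddCommMonoid M] (w : σ → M) (n : σ) :
    Finsupp.weight w (Finsupp.single n 1) = w n := by
  simp [Finsupp.weight_apply, Finsupp.sum_single_index]

lemma pderiv_isWeightedHomogeneous {σ M : Type*} [AddCommGroup M] [DecidableEq σ]
    {w : σ → M} {m : M} {p : MvPolynomial σ ℚ} (hp : p.IsWeightedHomogeneous w m) (n : σ) :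
    (pderiv n p).IsWeightedHomogeneous w (m - w n) := by
  rw [← mem_weightedHomogeneousSubmodule ℚ]
  rw [show pderiv n p = ∑ d ∈ p.support, pderiv n (monomial d (coeff d p)) by
    rw [← map_sum]; congr 1; exact p.as_sum]
  apply Submodule.sum_mem
  intro d hd
  rw [pderiv_monomial]
  by_cases h : d n = 0
  · rw [h]
    push_cast
    rw [mul_zero, monomial_zero]
    exact Submodule.zero_mem _
  · rw [mem_weightedHomogeneousSubmodule]
    apply isWeightedHomogeneous_monomial
    have h1 : Finsupp.weight w d = m := hp (mem_support_iff.mp hd)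
    have h2 := finsupp_sub_add d n h
    have h3 := congrArg (Finsupp.weight w) h2
    rw [map_add, weight_single_one, h1] at h3
    exact eq_sub_of_add_eq h3

lemma X_mul_pderiv_monomial {σ : Type*} [DecidableEq σ] (n : σ) (d : σ →₀ ℕ) (c : ℚ) :
    X n * pderiv n (monomial d c) = (d n : ℚ) • monomial d c := by
  rw [pderiv_monomial]
  by_cases h : d n = 0
  · simp [h]
  · rw [X, monomial_mul, one_mul, smul_monomial]
    rw [add_comm, finsupp_sub_add d n h, mul_comm, smul_eq_mul]

lemma euler {σ : Type*} [Fintype σ] [DecidableEq σ] (w : σ → ℤ) {m : ℤ} {p : MvPolynomial σ ℚ}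
    (hp : p.IsWeightedHomogeneous w m) :
    ∑ n : σ, (w n : ℚ) • (X n * pderiv n p) = (m : ℚ) • p := by
  have hrw : ∀ n : σ, X n * pderiv n p =
      ∑ d ∈ p.support, (d n : ℚ) • monomial d (coeff d p) := by
    intro n
    conv_lhs => rw [p.as_sum, map_sum, Finset.mul_sum]
    exact Finset.sum_congr rfl fun d _ => X_mul_pderiv_monomial n d _
  simp_rw [hrw, Finset.smul_sum]
  rw [Finset.sum_comm]
  conv_rhs => rw [p.as_sum, Finset.smul_sum]
  refine Finset.sum_congr rfl fun d hd => ?_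
  have hdm : Finsupp.weight w d = m := hp (mem_support_iff.mp hd)
  simp_rw [smul_smul, ← Finset.sum_smul]
  congr 1
  have hsum : ∑ n : σ, w n * (d n : ℤ) = m := by
    rw [← hdm, Finsupp.weight_apply, Finsupp.sum]
    rw [Finset.sum_subset (Finset.subset_univ d.support)
      (fun n _ hn => by simp [Finsupp.notMem_support_iff.mp hn])]
    exact Finset.sum_congr rfl fun n _ => by rw [nsmul_eq_mul, mul_comm]
  calc ∑ n : σ, (w n : ℚ) * (d n : ℚ) = ((∑ n : σ, w n * (d n : ℤ) : ℤ) : ℚ) := by push_cast; rfl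
    _ = (m : ℚ) := by rw [hsum]

/-- The variable `x_{2,0}`. -/
def v0 (g : ℕ) (hg : 2 ≤ g) : Vars g :=
  ⟨(⟨2, by omega⟩, ⟨0, by omega⟩), by
    refine ⟨?_, ?_, ?_, ?_⟩ <;> simp⟩

lemma vi_v0 (hg : 2 ≤ g) : vi (v0 g hg) = 2 := rfl

lemma vj_v0 (hg : 2 ≤ g) : vj (v0 g hg) = 0 := rfl

lemma xv_self (hg : 2 ≤ g) (v : Vars g) : xv g (vi v) (vj v) = X (Sum.inl v) := by
  obtain ⟨h1, h2, h3, h4⟩ := v.2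
  rw [xv, dif_pos]
  · congr 1
  · unfold vi vj
    refine ⟨by omega, by omega, by omega, by omega, by omega, by omega⟩

lemma xv_two_zero (hg : 2 ≤ g) : xv g 2 0 = X (Sum.inl (v0 g hg)) := by
  rw [← xv_self hg (v0 g hg)]; rfl

lemma xv_zero_zero : xv g 0 0 = (g : A g) := by
  rw [xv, dif_neg (by omega), if_pos ⟨rfl, rfl⟩]

lemma xv_one_negone : xv g 1 (-1) = 0 := by
  rw [xv, dif_neg (by omega), if_neg (by omega)]

lemma prod_desc (m : ℕ) : (∏ s ∈ Finset.range m, ((m : ℚ) + 1 - s)) = (m + 1).factorial := by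
  induction m with
  | zero => simp
  | succ m ih =>
    rw [Finset.prod_range_succ']
    have h1 : ∀ s ∈ Finset.range m, ((m + 1 : ℕ) : ℚ) + 1 - ((s + 1 : ℕ) : ℚ) = (m : ℚ) + 1 - s := by
      intro s _; push_cast; ring
    rw [Finset.prod_congr rfl h1, ih, Nat.factorial_succ (m + 1)]
    push_cast; ring

lemma binom_pred (n : ℕ) : binom (n : ℤ) ((n : ℤ) - 1) = (n : ℚ) := by
  cases n with
  | zero => rw [binom, if_neg (by omega)]; simp
  | succ m =>
    rw [binom, if_pos (by omega)]
    have h1 : ((m : ℤ) + 1 - 1).toNat = m := by omega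
    rw [show ((m + 1 : ℕ) : ℤ) - 1 = (m : ℤ) + 1 - 1 by push_cast; ring, h1]
    have h2 : ∀ s ∈ Finset.range m, (((m + 1 : ℕ) : ℤ) : ℚ) - s = ((m : ℚ) + 1 - s) := by
      intro s _; push_cast; ring
    rw [Finset.prod_congr rfl h2, prod_desc, Nat.factorial_succ]
    push_cast
    rw [mul_div_assoc, div_self (by positivity), mul_one]

lemma binom_one (n : ℤ) : binom n 1 = (n : ℚ) := by
  rw [binom, if_pos (by omega)]
  norm_num

/-- Shorthand for the 2nd-order coefficient of `F`. -/
noncomputable def cc (g : ℕ) (v w : Vars g) : A g :=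
  Y g * xv g (vi v - 1) (vj v - 1) * xv g (vi w - 1) (vj w - 1) -
    C (binom (vi v + vi w - 2) (vi v - 1)) * xv g (vi v + vi w - 2) (vj v + vj w)

/-- Shorthand for the 1st-order coefficient of `F`. -/
noncomputable def bb (g : ℕ) (v : Vars g) : A g := xv g (vi v - 2) (vj v)

lemma Fop_apply (g : ℕ) (p : A g) :
    Fop g p = (1 / 2 : ℚ) •
        (∑ v : Vars g, ∑ w : Vars g, cc g v w * pderiv (Sum.inl v) (pderiv (Sum.inl w) p)) +
      ∑ v : Vars g, bb g v * pderiv (Sum.inl v) p := by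
  simp [Fop, cc, bb, LinearMap.sum_apply, LinearMap.comp_apply, LinearMap.mulLeft_apply]

lemma nonneg_vi (v : Vars g) : 0 ≤ vi v := Int.natCast_nonneg _

lemma cc_right_v0 (hg : 2 ≤ g) (v : Vars g) :
    cc g v (v0 g hg) = -((vi v : ℚ) • X (Sum.inl v)) := by
  rw [cc, vi_v0, vj_v0]
  rw [show (2 : ℤ) - 1 = 1 by ring, show (0 : ℤ) - 1 = -1 by ring, xv_one_negone, mul_zero]
  rw [show vi v + 2 - 2 = vi v by ring, show vj v + 0 = vj v by ring, xv_self hg]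
  obtain ⟨n, hn⟩ : ∃ n : ℕ, vi v = (n : ℤ) := ⟨(vi v).toNat, by
    have := nonneg_vi (g := g) v; omega⟩
  rw [hn, binom_pred, zero_sub, smul_eq_C_mul]
  norm_cast

lemma cc_left_v0 (hg : 2 ≤ g) (w : Vars g) :
    cc g (v0 g hg) w = -((vi w : ℚ) • X (Sum.inl w)) := by
  rw [cc, vi_v0, vj_v0]
  rw [show (2 : ℤ) - 1 = 1 by ring, show (0 : ℤ) - 1 = -1 by ring, xv_one_negone,
    mul_zero, zero_mul]
  rw [show (2 : ℤ) + vi w - 2 = vi w by ring, show (0 : ℤ) + vj w = vj w by ring, xv_self hg,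
    binom_one, zero_sub, smul_eq_C_mul]

lemma bb_v0 (hg : 2 ≤ g) : bb g (v0 g hg) = (g : A g) := by
  rw [bb, vi_v0, vj_v0, show (2 : ℤ) - 2 = 0 by ring, xv_zero_zero]

end Sl2Aux

namespace Sl2Aux

variable {g : ℕ}

/-- `x_{i,j}` is weighted homogeneous of weight `(i,j)`. -/
lemma xv_isWeightedHomogeneous (g : ℕ) (i j : ℤ) :
    (xv g i j).IsWeightedHomogeneous (wt g) (i, j) := by
  rw [xv]
  split_ifs with h h0
  · have := isWeightedHomogeneous_X ℚ (wt g) (Sum.inl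
      (⟨(⟨i.toNat, by omega⟩, ⟨j.toNat, by omega⟩),
        show i.toNat ≤ j.toNat + 2 by omega,
        show j.toNat ≤ 2 * g - 2 by omega,
        show (i.toNat + j.toNat) % 2 = 0 by omega,
        show ¬(i.toNat = 0 ∧ j.toNat = 0) by omega⟩ : Vars g))
    convert this using 2
    · simp [wt, vi]; omega
    · simp [wt, vj]; omega
  · obtain ⟨hi, hj⟩ := h0
    subst hi; subst hj
    have := isWeightedHomogeneous_C (R := ℚ) (wt g) ((g : ℚ))
    rw [show ((0 : ℤ), (0 : ℤ)) = (0 : ℤ × ℤ) from rfl]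
    convert this using 1
    exact (map_natCast C g).symm
  · exact isWeightedHomogeneous_zero ℚ (wt g) _

lemma Y_isWeightedHomogeneous (g : ℕ) :
    (Y g).IsWeightedHomogeneous (wt g) ((0 : ℤ), (2 : ℤ)) :=
  isWeightedHomogeneous_X ℚ (wt g) (Sum.inr ())

lemma wt_inl (v : Vars g) : wt g (Sum.inl v) = (vi v, vj v) := rfl

lemma pderiv_e_mul (hg : 2 ≤ g) (α : A g) (v : Vars g) :
    pderiv (Sum.inl v) (xv g 2 0 * α) =
      (if v = v0 g hg then α else 0) + xv g 2 0 * pderiv (Sum.inl v) α := by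
  rw [pderiv_mul, xv_two_zero hg]
  by_cases hv : v = v0 g hg
  · subst hv; simp
  · rw [pderiv_X_of_ne (by simpa using Ne.symm hv), if_neg hv, zero_mul, zero_add]

lemma pderiv2_e_mul (hg : 2 ≤ g) (α : A g) (v w : Vars g) :
    pderiv (Sum.inl v) (pderiv (Sum.inl w) (xv g 2 0 * α)) =
      (if w = v0 g hg then pderiv (Sum.inl v) α else 0) +
        ((if v = v0 g hg then pderiv (Sum.inl w) α else 0) +
          xv g 2 0 * pderiv (Sum.inl v) (pderiv (Sum.inl w) α)) := by
  rw [pderiv_e_mul hg α w, map_add, pderiv_e_mul hg (pderiv (Sum.inl w) α) v]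
  congr 1
  by_cases hw : w = v0 g hg <;> simp [hw]

lemma euler_idx (hg : 2 ≤ g) {i j : ℤ} {α : A g}
    (hα : α.IsWeightedHomogeneous (wt g) (i, j)) :
    ∑ v : Vars g, (vi v : ℚ) • (X (Sum.inl v) * pderiv (Sum.inl v) α) = (i : ℚ) • α := by
  classical
  have h1 : α.IsWeightedHomogeneous (fun n => (wt g n).1) i := by
    intro d hd
    have h := hα hd
    have hfst : (Finsupp.weight (wt g) d).1 = Finsupp.weight (fun n => (wt g n).1) d := by
      simp only [Finsupp.weight_apply, Finsupp.sum, Prod.fst_sum, Prod.smul_fst]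
    rw [← hfst, h]
  have h2 := euler (fun n : Idx g => (wt g n).1) h1
  rw [Fintype.sum_sum_type] at h2
  have h3 : ∀ b : Unit, ((wt g (Sum.inr b)).1 : ℚ) •
      (X (Sum.inr b) * pderiv (Sum.inr b) α) = 0 := by
    intro b; simp [wt]
  rw [Finset.sum_congr rfl fun b _ => h3 b, Finset.sum_const_zero, add_zero] at h2
  exact h2

lemma Fop_e_mul (hg : 2 ≤ g) (α : A g) :
    Fop g (xv g 2 0 * α) = xv g 2 0 * Fop g α + ((g : ℚ) • α -
      ∑ v : Vars g, (vi v : ℚ) • (X (Sum.inl v) * pderiv (Sum.inl v) α)) := by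
  classical
  rw [Fop_apply, Fop_apply]
  have hS2 : ∑ v : Vars g, ∑ w : Vars g,
      cc g v w * pderiv (Sum.inl v) (pderiv (Sum.inl w) (xv g 2 0 * α)) =
      (-∑ v : Vars g, (vi v : ℚ) • (X (Sum.inl v) * pderiv (Sum.inl v) α)) +
      ((-∑ v : Vars g, (vi v : ℚ) • (X (Sum.inl v) * pderiv (Sum.inl v) α)) +
       xv g 2 0 * ∑ v : Vars g, ∑ w : Vars g,
         cc g v w * pderiv (Sum.inl v) (pderiv (Sum.inl w) α)) := by
    have hA : (∑ v : Vars g, ∑ w : Vars g, cc g v w *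
        (if w = v0 g hg then pderiv (Sum.inl v) α else 0)) =
        -∑ v : Vars g, (vi v : ℚ) • (X (Sum.inl v) * pderiv (Sum.inl v) α) := by
      rw [← Finset.sum_neg_distrib]
      refine Finset.sum_congr rfl fun v _ => ?_
      rw [Finset.sum_eq_single (v0 g hg)
        (fun w _ hw => by rw [if_neg hw, mul_zero])
        (fun h => absurd (Finset.mem_univ _) h),
        if_pos rfl, cc_right_v0 hg, neg_mul, smul_mul_assoc]
    have hB : (∑ v : Vars g, ∑ w : Vars g, cc g v w *
        (if v = v0 g hg then pderiv (Sum.inl w) α else 0)) =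
        -∑ v : Vars g, (vi v : ℚ) • (X (Sum.inl v) * pderiv (Sum.inl v) α) := by
      rw [Finset.sum_comm, ← Finset.sum_neg_distrib]
      refine Finset.sum_congr rfl fun w _ => ?_
      rw [Finset.sum_eq_single (v0 g hg)
        (fun v _ hv => by rw [if_neg hv, mul_zero])
        (fun h => absurd (Finset.mem_univ _) h),
        if_pos rfl, cc_left_v0 hg, neg_mul, smul_mul_assoc]
    have hC : (∑ v : Vars g, ∑ w : Vars g, cc g v w *
        (xv g 2 0 * pderiv (Sum.inl v) (pderiv (Sum.inl w) α))) =
        xv g 2 0 * ∑ v : Vars g, ∑ w : Vars g,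
          cc g v w * pderiv (Sum.inl v) (pderiv (Sum.inl w) α) := by
      rw [Finset.mul_sum]
      refine Finset.sum_congr rfl fun v _ => ?_
      rw [Finset.mul_sum]
      exact Finset.sum_congr rfl fun w _ => by ring
    simp_rw [pderiv2_e_mul hg α, mul_add, Finset.sum_add_distrib]
    rw [hA, hB, hC]
  have hS1 : ∑ v : Vars g, bb g v * pderiv (Sum.inl v) (xv g 2 0 * α) =
      (g : ℚ) • α + xv g 2 0 * ∑ v : Vars g, bb g v * pderiv (Sum.inl v) α := by
    have hA : (∑ v : Vars g, bb g v * (if v = v0 g hg then α else 0)) = (g : ℚ) • α := by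
      rw [Finset.sum_eq_single (v0 g hg)
        (fun v _ hv => by rw [if_neg hv, mul_zero])
        (fun h => absurd (Finset.mem_univ _) h),
        if_pos rfl, bb_v0 hg, smul_eq_C_mul, map_natCast]
    have hB : (∑ v : Vars g, bb g v * (xv g 2 0 * pderiv (Sum.inl v) α)) =
        xv g 2 0 * ∑ v : Vars g, bb g v * pderiv (Sum.inl v) α := by
      rw [Finset.mul_sum]
      exact Finset.sum_congr rfl fun v _ => by ring
    simp_rw [pderiv_e_mul hg α, mul_add, Finset.sum_add_distrib]
    rw [hA, hB]
  rw [hS2, hS1]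
  simp only [smul_add, mul_add, mul_smul_comm, smul_neg]
  module

end Sl2Aux

open Sl2Aux in
/-- **sl₂-relations of the formal action.** For homogeneous `α` of bidegree `(i,j)`:
`[E,F](α) = H(α) = (i-g)·α`, and (encoding `[H,E] = 2E`, `[H,F] = -2F`) `E` shifts the
bidegree by `(+2,0)` while `F` shifts it by `(-2,0)`. -/
theorem formal_sl2_relations (g : ℕ) (hg : 2 ≤ g) (i j : ℤ) (α : A g)
    (hα : α ∈ weightedHomogeneousSubmodule ℚ (wt g) (i, j)) :
    Eop g (Fop g α) - Fop g (Eop g α) = ((i : ℚ) - (g : ℚ)) • α ∧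
      Eop g α ∈ weightedHomogeneousSubmodule ℚ (wt g) (i + 2, j) ∧
      Fop g α ∈ weightedHomogeneousSubmodule ℚ (wt g) (i - 2, j) := by
  classical
  rw [mem_weightedHomogeneousSubmodule] at hα
  have hE : ∀ p : A g, Eop g p = xv g 2 0 * p := fun p => rfl
  refine ⟨?_, ?_, ?_⟩
  · rw [hE, hE, Fop_e_mul hg, euler_idx hg hα, sub_smul]
    abel
  · rw [hE, mem_weightedHomogeneousSubmodule]
    have h := (xv_isWeightedHomogeneous g 2 0).mul hα
    rwa [show ((2 : ℤ), (0 : ℤ)) + (i, j) = (i + 2, j) from by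
      simp only [Prod.mk_add_mk, Prod.ext_iff]; constructor <;> ring] at h
  · rw [Fop_apply]
    refine Submodule.add_mem _
      (Submodule.smul_mem _ _ (Submodule.sum_mem _ fun v _ => Submodule.sum_mem _ fun w _ => ?_))
      (Submodule.sum_mem _ fun v _ => ?_)
    · rw [mem_weightedHomogeneousSubmodule]
      have hcc : (cc g v w).IsWeightedHomogeneous (wt g) (vi v + vi w - 2, vj v + vj w) := by
        have h1 := ((Y_isWeightedHomogeneous g).mul
          (xv_isWeightedHomogeneous g (vi v - 1) (vj v - 1))).mul
          (xv_isWeightedHomogeneous g (vi w - 1) (vj w - 1))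
        have h2 := (isWeightedHomogeneous_C (wt g)
          (binom (vi v + vi w - 2) (vi v - 1))).mul
          (xv_isWeightedHomogeneous g (vi v + vi w - 2) (vj v + vj w))
        rw [show ((0 : ℤ), (2 : ℤ)) + (vi v - 1, vj v - 1) + (vi w - 1, vj w - 1) =
          (vi v + vi w - 2, vj v + vj w) from by
            simp only [Prod.mk_add_mk, Prod.ext_iff]; constructor <;> ring] at h1
        rw [show (0 : ℤ × ℤ) + (vi v + vi w - 2, vj v + vj w) =
          (vi v + vi w - 2, vj v + vj w) from zero_add _] at h2
        rw [← mem_weightedHomogeneousSubmodule] at h1 h2 ⊢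
        exact Submodule.sub_mem _ h1 h2
      have hd := pderiv_isWeightedHomogeneous
        (pderiv_isWeightedHomogeneous hα (Sum.inl w)) (Sum.inl v)
      have h := hcc.mul hd
      rwa [show (vi v + vi w - 2, vj v + vj w) + ((i, j) - wt g (Sum.inl w) - wt g (Sum.inl v)) =
        (i - 2, j) from by
          simp only [wt, Sum.elim_inl, Prod.mk_sub_mk, Prod.mk_add_mk, Prod.ext_iff]
          constructor <;> ring] at h
    · rw [mem_weightedHomogeneousSubmodule]
      have hbb : (bb g v).IsWeightedHomogeneous (wt g) (vi v - 2, vj v) :=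
        xv_isWeightedHomogeneous g (vi v - 2) (vj v)
      have hd := pderiv_isWeightedHomogeneous hα (Sum.inl v)
      have h := hbb.mul hd
      rwa [show (vi v - 2, vj v) + ((i, j) - wt g (Sum.inl v)) = (i - 2, j) from by
        simp only [wt, Sum.elim_inl, Prod.mk_sub_mk, Prod.mk_add_mk, Prod.ext_iff]
        constructor <;> ring] at h
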